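/- Under assumption A1, let μ ∈ (0, 1], let x ∈ F_p together with (y, s) ∈ F_d satisfy the centering condition Xs = μe. Then for any x' ∈ F_p⁰ and any (y', s') ∈ F_d⁰, every coordinate satisfies x_j ≥ μ x'_j / (n + ⟨x', s'⟩). -/

import Mathlib

open Matrix

noncomputable def enormR {ι : Type*} [Fintype ι] (v : ι → ℝ) : ℝ :=
  Real.sqrt (∑ i, (v i) ^ 2)

noncomputable def opNorm {ι κ : Type*} [Fintype ι] [Fintype κ]
    (M : Matrix ι κ ℝ) : ℝ :=
  sSup {r : ℝ | ∃ v : κ → ℝ, enormR v ≤ 1 ∧ r = enormR (M *ᵥ v)}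

noncomputable def lambdaMin {ι : Type*} [Fintype ι] (M : Matrix ι ι ℝ) : ℝ :=
  sInf {r : ℝ | ∃ v : ι → ℝ, enormR v = 1 ∧ r = v ⬝ᵥ (M *ᵥ v)}

noncomputable def lambdaMax {ι : Type*} [Fintype ι] (M : Matrix ι ι ℝ) : ℝ :=
  sSup {r : ℝ | ∃ v : ι → ℝ, enormR v = 1 ∧ r = v ⬝ᵥ (M *ᵥ v)}

noncomputable def condNum {ι : Type*} [Fintype ι] (M : Matrix ι ι ℝ) : ℝ :=
  lambdaMax M / lambdaMin M

noncomputable def gradProj {m n : ℕ} (B : Matrix (Fin m) (Fin n) ℝ) :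
    Matrix (Fin n) (Fin n) ℝ :=
  1 - Bᵀ * (B * Bᵀ)⁻¹ * B

/-- The proximity measure `δ(x, μ) = ‖P_{AX}((1/μ) X c - e)‖`. -/
noncomputable def prox {m n : ℕ} (A : Matrix (Fin m) (Fin n) ℝ)
    (c x : Fin n → ℝ) (μ : ℝ) : ℝ :=
  enormR (gradProj (A * Matrix.diagonal x) *ᵥ (μ⁻¹ • (Matrix.diagonal x *ᵥ c) - 1))

/-- The proximity measure as `min_{(y,s) ∈ F_d} ‖(1/μ) X s - e‖`. -/
noncomputable def proxMin {m n : ℕ} (A : Matrix (Fin m) (Fin n) ℝ)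
    (c x : Fin n → ℝ) (μ : ℝ) : ℝ :=
  sInf {r : ℝ | ∃ (y : Fin m → ℝ) (s : Fin n → ℝ),
    Aᵀ *ᵥ y + s = c ∧ (∀ i, 0 ≤ s i) ∧
    r = enormR (μ⁻¹ • (Matrix.diagonal x *ᵥ s) - 1)}

/-- The primal normal matrix `A X² Aᵀ` is positive semidefinite. -/
theorem normalPSD {m n : ℕ} (A : Matrix (Fin m) (Fin n) ℝ) (x : Fin n → ℝ) :
    (A * Matrix.diagonal x ^ 2 * Aᵀ).PosSemidef := by
  have h : A * Matrix.diagonal x ^ 2 * Aᵀ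
      = (A * Matrix.diagonal x) * (A * Matrix.diagonal x)ᴴ := by
    rw [Matrix.conjTranspose_mul, Matrix.conjTranspose_eq_transpose_of_trivial,
      Matrix.conjTranspose_eq_transpose_of_trivial, Matrix.diagonal_transpose, pow_two,
      Matrix.mul_assoc, Matrix.mul_assoc, Matrix.mul_assoc]
  rw [h]
  exact Matrix.posSemidef_self_mul_conjTranspose _

/-- coordinatewise lower bound for centered primal points. -/
theorem stmt_5 {m n : ℕ} (A : Matrix (Fin m) (Fin n) ℝ) (b : Fin m → ℝ) (c : Fin n → ℝ)
    -- Assumption A1: nonempty primal and dual interiors, full row rank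
    (hrank : A.rank = m)
    (hFp0 : ∃ x0 : Fin n → ℝ, A *ᵥ x0 = b ∧ ∀ i, 0 < x0 i)
    (hFd0 : ∃ (y0 : Fin m → ℝ) (s0 : Fin n → ℝ), Aᵀ *ᵥ y0 + s0 = c ∧ ∀ i, 0 < s0 i)
    (μ : ℝ) (hμ0 : 0 < μ) (hμ1 : μ ≤ 1)
    (x : Fin n → ℝ) (y : Fin m → ℝ) (s : Fin n → ℝ)
    (hxfeas : A *ᵥ x = b) (hxnn : ∀ i, 0 ≤ x i)
    (hdfeas : Aᵀ *ᵥ y + s = c) (hsnn : ∀ i, 0 ≤ s i)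
    (hcenter : ∀ j, x j * s j = μ)
    (x' : Fin n → ℝ) (hx'feas : A *ᵥ x' = b) (hx'pos : ∀ i, 0 < x' i)
    (y' : Fin m → ℝ) (s' : Fin n → ℝ)
    (hd'feas : Aᵀ *ᵥ y' + s' = c) (hs'pos : ∀ i, 0 < s' i) :
    ∀ j, μ * x' j / (n + x' ⬝ᵥ s') ≤ x j := by
  intro j
  -- orthogonality
  have hsub : s - s' = Aᵀ *ᵥ (y' - y) := by
    rw [Matrix.mulVec_sub]
    have h1 : Aᵀ *ᵥ y' = c - s' := eq_sub_of_add_eq hd'feas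
    have h2 : Aᵀ *ᵥ y = c - s := eq_sub_of_add_eq hdfeas
    rw [h1, h2]; abel
  have h0 : (x - x') ⬝ᵥ (s - s') = 0 := by
    rw [hsub, Matrix.dotProduct_mulVec, Matrix.vecMul_transpose, Matrix.mulVec_sub,
      hxfeas, hx'feas, sub_self, zero_dotProduct]
  have horth : x ⬝ᵥ s' + x' ⬝ᵥ s = x ⬝ᵥ s + x' ⬝ᵥ s' := by
    have := h0
    rw [sub_dotProduct, dotProduct_sub, dotProduct_sub] at this
    linarith
  have hxs : x ⬝ᵥ s = n * μ := by
    unfold dotProduct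
    simp only [hcenter]
    rw [Finset.sum_const, Finset.card_univ, Fintype.card_fin, nsmul_eq_mul]
  have hxs'nn : 0 ≤ x ⬝ᵥ s' := Finset.sum_nonneg fun i _ =>
    mul_nonneg (hxnn i) (hs'pos i).le
  have hx's'nn : 0 ≤ x' ⬝ᵥ s' := Finset.sum_nonneg fun i _ =>
    mul_nonneg (hx'pos i).le (hs'pos i).le
  have hterm : x' j * s j ≤ x' ⬝ᵥ s := by
    have : ∀ i ∈ Finset.univ, 0 ≤ x' i * s i := fun i _ =>
      mul_nonneg (hx'pos i).le (hsnn i)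
    exact Finset.single_le_sum this (Finset.mem_univ j)
  have hkey : x' j * s j ≤ n * μ + x' ⬝ᵥ s' := by
    calc x' j * s j ≤ x' ⬝ᵥ s := hterm
      _ ≤ x ⬝ᵥ s' + x' ⬝ᵥ s := by linarith
      _ = n * μ + x' ⬝ᵥ s' := by rw [horth, hxs]
  have hn1 : (1 : ℝ) ≤ n := by
    have : 0 < n := Fin.pos_iff_nonempty.mpr ⟨j⟩
    exact_mod_cast this
  have hsj : 0 < s j := by
    rcases lt_or_ge 0 (s j) with h | h
    · exact h
    · exfalso
      have : x j * s j ≤ 0 := mul_nonpos_of_nonneg_of_nonpos (hxnn j) h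
      rw [hcenter j] at this; linarith
  have hxj : x j = μ / s j := by
    field_simp
    linarith [hcenter j]
  have hden : 0 < (n : ℝ) + x' ⬝ᵥ s' := by linarith
  rw [hxj, div_le_div_iff₀ hden hsj]
  have h1 : x' j * s j ≤ (n : ℝ) + x' ⬝ᵥ s' := by nlinarith
  nlinarith [hx'pos j, (hx'pos j).le, mul_le_mul_of_nonneg_left h1 hμ0.le]
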